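/- For every simple root α ∈ Δ: Σ_{β ∈ R, ⟨β,ϖ_α∨⟩ > 0} ⟨β, α∨⟩ = d_1(α), where d_1(α) = 2⟨ρ, ϖ_α∨⟩ / ⟨ϖ_α, ϖ_α∨⟩. (Here ⟨β,α∨⟩ is the Cartan integer n(β,α).) -/
import Mathlib


open scoped RealInnerProductSpace

attribute [local instance] Classical.propDecidable

noncomputable section

/-- The coroot `α∨ = (2/⟨α,α⟩) • α` of a vector `α` in a real inner product space
(using the inner product to identify `V` with `V*`). -/
def coroot {V : Type*} [NormedAddCommGroup V] [InnerProductSpace ℝ V] (α : V) : V :=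
  (2 / ⟪α, α⟫) • α

/-- A finite, reduced, irreducible, crystallographic root system in the real inner
product space `V`.  (The Weyl group automatically acts by isometries, since the
reflections are defined via the inner product.) -/
structure IsRootSystem {V : Type*} [NormedAddCommGroup V] [InnerProductSpace ℝ V]
    (R : Finset V) : Prop where
  nonempty : R.Nonempty
  zero_not_mem : (0 : V) ∉ R
  span_eq_top : Submodule.span ℝ (R : Set V) = ⊤
  reduced : ∀ α ∈ R, ∀ t : ℝ, t • α ∈ R → t = 1 ∨ t = -1
  reflect_mem : ∀ α ∈ R, ∀ β ∈ R, β - ⟪β, coroot α⟫ • α ∈ R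
  crystallographic : ∀ α ∈ R, ∀ β ∈ R, ∃ n : ℤ, ⟪β, coroot α⟫ = (n : ℝ)
  irreducible : ∀ S : Set V, (∀ α ∈ R, ∀ β ∈ R, α ∈ S → ⟪α, β⟫ ≠ 0 → β ∈ S) →
    (∃ α ∈ R, α ∈ S) → ∀ β ∈ R, β ∈ S

/-- `Δ` is a base of simple roots for the root system `R`: it is a linearly
independent subset of `R` and every root is a nonnegative or nonpositive integral
combination of elements of `Δ`. -/
structure IsBase {V : Type*} [NormedAddCommGroup V] [InnerProductSpace ℝ V]
    (R Δ : Finset V) : Prop where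
  subset : Δ ⊆ R
  indep : LinearIndependent ℝ (fun β : Δ => (β : V))
  expand : ∀ β ∈ R, (∃ c : V → ℕ, β = ∑ δ ∈ Δ, (c δ : ℝ) • δ) ∨
    (∃ c : V → ℕ, β = -(∑ δ ∈ Δ, (c δ : ℝ) • δ))

/-- `Σ_{β∈R, ⟨β,ϖ_α∨⟩>0} ⟨β,α∨⟩ = d_1(α) = 2⟨ρ,ϖ_α∨⟩/⟨ϖ_α,ϖ_α∨⟩`. -/
theorem statement_6 {V : Type*} [NormedAddCommGroup V] [InnerProductSpace ℝ V]
    [FiniteDimensional ℝ V]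
    (R Δ : Finset V) (hR : IsRootSystem R) (hΔ : IsBase R Δ)
    -- `Rp = R⁺` is the set of positive roots
    (Rp : Finset V)
    (hRp : ∀ β, β ∈ Rp ↔ β ∈ R ∧ ∃ c : V → ℕ, β = ∑ δ ∈ Δ, (c δ : ℝ) • δ)
    -- `ρ` is half the sum of the positive roots
    (ρ : V) (hρ : ρ = (2⁻¹ : ℝ) • ∑ β ∈ Rp, β)
    (α : V) (hα : α ∈ Δ)
    -- the fundamental weight `ϖ = ϖ_α` and fundamental coweight `ϖv = ϖ_α∨`
    (ϖ : V) (hϖ : ∀ β ∈ Δ, ⟪ϖ, coroot β⟫ = if β = α then 1 else 0)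
    (ϖv : V) (hϖv : ∀ β ∈ Δ, ⟪β, ϖv⟫ = if β = α then 1 else 0) :
    ∑ β ∈ R.filter (fun β => 0 < ⟪β, ϖv⟫), ⟪β, coroot α⟫ =
      2 * ⟪ρ, ϖv⟫ / ⟪ϖ, ϖv⟫ := by
  classical
  have hαR : α ∈ R := hΔ.subset hα
  -- simple roots are nonzero, and nonzero self-inner-products
  have hΔ0 : ∀ δ ∈ Δ, δ ≠ (0 : V) := fun δ hδ h => hR.zero_not_mem (h ▸ hΔ.subset hδ)
  have hΔne : ∀ δ ∈ Δ, ⟪δ, δ⟫ ≠ (0 : ℝ) := fun δ hδ h =>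
    hΔ0 δ hδ (inner_self_eq_zero.mp h)
  -- pairing of a simple root with its own coroot is 2
  have hpair2 : ∀ δ ∈ Δ, ⟪δ, coroot δ⟫ = (2 : ℝ) := by
    intro δ hδ
    rw [coroot, real_inner_smul_right, div_mul_cancel₀ _ (hΔne δ hδ)]
  set T := R.filter (fun β => 0 < ⟪β, ϖv⟫) with hT
  -- pairing of a nonneg combination with ϖv is the α-coefficient
  have hcoef : ∀ c : V → ℕ, ⟪∑ δ ∈ Δ, (c δ : ℝ) • δ, ϖv⟫ = (c α : ℝ) := by
    intro c
    rw [sum_inner]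
    rw [Finset.sum_congr rfl fun δ hδ => by rw [real_inner_smul_left, hϖv δ hδ]]
    simp [mul_ite, hα]
  -- T ⊆ Rp
  have hTRp : T ⊆ Rp := by
    intro β hβ
    obtain ⟨hβR, hposβ⟩ := Finset.mem_filter.mp hβ
    rcases hΔ.expand β hβR with ⟨c, hc⟩ | ⟨c, hc⟩
    · exact (hRp β).mpr ⟨hβR, c, hc⟩
    · exfalso
      rw [hc, inner_neg_left, hcoef] at hposβ
      have : (0 : ℝ) ≤ (c α : ℝ) := Nat.cast_nonneg _
      linarith
  -- elements of Rp pair nonnegatively with ϖv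
  have hRpnn : ∀ β ∈ Rp, (0 : ℝ) ≤ ⟪β, ϖv⟫ := by
    intro β hβ
    obtain ⟨_, c, hc⟩ := (hRp β).mp hβ
    rw [hc, hcoef]
    exact Nat.cast_nonneg _
  -- the sum over T of pairings with ϖv equals the one over Rp
  have hsum_eq : ∑ β ∈ T, ⟪β, ϖv⟫ = ∑ β ∈ Rp, ⟪β, ϖv⟫ := by
    refine Finset.sum_subset hTRp fun β hβ hnβ => ?_
    have h1 := hRpnn β hβ
    by_contra h
    exact hnβ (Finset.mem_filter.mpr ⟨((hRp β).mp hβ).1, lt_of_le_of_ne h1 (Ne.symm h)⟩)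
  -- orthogonality: for δ ∈ Δ, δ ≠ α, the sum of pairings with coroot δ vanishes
  have horth : ∀ δ ∈ Δ, δ ≠ α → ∑ β ∈ T, ⟪β, coroot δ⟫ = 0 := by
    intro δ hδ hδα
    have hδR : δ ∈ R := hΔ.subset hδ
    have hδv : ⟪δ, ϖv⟫ = 0 := by rw [hϖv δ hδ, if_neg hδα]
    refine Finset.sum_involution (fun β _ => β - ⟪β, coroot δ⟫ • δ) ?_ ?_ ?_ ?_
    · intro β _
      rw [inner_sub_left, real_inner_smul_left, hpair2 δ hδ]
      ring
    · intro β _ hne h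
      rcases smul_eq_zero.mp (sub_eq_self.mp h) with h3 | h3
      · exact hne h3
      · exact hΔ0 δ hδ h3
    · intro β hβ
      obtain ⟨hβR, hposβ⟩ := Finset.mem_filter.mp hβ
      refine Finset.mem_filter.mpr ⟨hR.reflect_mem δ hδR β hβR, ?_⟩
      rwa [inner_sub_left, real_inner_smul_left, hδv, mul_zero, sub_zero]
    · intro β hβ
      have hn : ⟪β - ⟪β, coroot δ⟫ • δ, coroot δ⟫ = -⟪β, coroot δ⟫ := by
        rw [inner_sub_left, real_inner_smul_left, hpair2 δ hδ]
        ring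
      show (β - ⟪β, coroot δ⟫ • δ) - ⟪β - ⟪β, coroot δ⟫ • δ, coroot δ⟫ • δ = β
      rw [hn, neg_smul, sub_neg_eq_add, sub_add_cancel]
  -- Δ spans V
  have hspan : Submodule.span ℝ (Δ : Set V) = ⊤ := by
    rw [eq_top_iff, ← hR.span_eq_top]
    refine Submodule.span_le.mpr fun β hβ => ?_
    have hmem : ∀ c : V → ℕ,
        (∑ δ ∈ Δ, (c δ : ℝ) • δ) ∈ Submodule.span ℝ (Δ : Set V) :=
      fun c => Submodule.sum_mem _ fun δ hδ =>
        Submodule.smul_mem _ _ (Submodule.subset_span hδ)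
    rcases hΔ.expand β hβ with ⟨c, hc⟩ | ⟨c, hc⟩
    · rw [hc]; exact hmem c
    · rw [hc]; exact neg_mem (hmem c)
  set k : ℝ := ∑ β ∈ T, ⟪β, coroot α⟫ with hk
  -- σ - k • ϖ pairs to zero with all simple roots, hence is zero
  set v : V := (∑ β ∈ T, β) - k • ϖ with hv
  have hvδ : ∀ δ ∈ Δ, ⟪v, δ⟫ = 0 := by
    intro δ hδ
    have hc0 : ⟪v, coroot δ⟫ = 0 := by
      rw [hv, inner_sub_left, sum_inner, real_inner_smul_left, hϖ δ hδ]
      by_cases hδα : δ = α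
      · subst hδα
        simp [← hk]
      · rw [horth δ hδ hδα, if_neg hδα]
        ring
    rw [coroot, real_inner_smul_right] at hc0
    have h2 : (2 : ℝ) / ⟪δ, δ⟫ ≠ 0 := div_ne_zero two_ne_zero (hΔne δ hδ)
    exact (mul_eq_zero.mp hc0).resolve_left h2
  have hv0 : v = 0 := by
    have hall : ∀ w : V, ⟪v, w⟫ = 0 := by
      intro w
      have hw : w ∈ Submodule.span ℝ (Δ : Set V) := hspan ▸ Submodule.mem_top
      induction hw using Submodule.span_induction with
      | mem x hx => exact hvδ x hx
      | zero => exact inner_zero_right v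
      | add x y _ _ hx hy => rw [inner_add_right, hx, hy, add_zero]
      | smul a x _ hx => rw [real_inner_smul_right, hx, mul_zero]
    exact inner_self_eq_zero.mp (hall v)
  have hσ : (∑ β ∈ T, β) = k • ϖ := sub_eq_zero.mp hv0
  -- pairing with ϖv
  have hσv : ⟪∑ β ∈ T, β, ϖv⟫ = 2 * ⟪ρ, ϖv⟫ := by
    rw [sum_inner, hsum_eq, hρ, real_inner_smul_left, ← sum_inner]
    ring
  have hσpos : (0 : ℝ) < ⟪∑ β ∈ T, β, ϖv⟫ := by
    rw [sum_inner]
    refine Finset.sum_pos (fun β hβ => (Finset.mem_filter.mp hβ).2) ⟨α, ?_⟩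
    refine Finset.mem_filter.mpr ⟨hαR, ?_⟩
    rw [hϖv α hα, if_pos rfl]
    norm_num
  have hkey : k * ⟪ϖ, ϖv⟫ = 2 * ⟪ρ, ϖv⟫ := by
    rw [← hσv, hσ, real_inner_smul_left]
  have hϖϖv : ⟪ϖ, ϖv⟫ ≠ 0 := by
    intro h
    rw [hσ, real_inner_smul_left, h, mul_zero] at hσpos
    exact lt_irrefl 0 hσpos
  rw [← hkey, mul_div_assoc, div_self hϖϖv, mul_one]
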